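/- Let T = ⋃_{α a countable successor ordinal} ω₁^α, ordered by extension, with path space P(T) ⊆ 2^T. Then: (b) P(T) has no G_δ points; and (c) no point of P(T) \ Σ(T) is the limit of a nontrivial (injective) sequence in P(T). Moreover P(T) does not have the countable chain condition. -/

import Mathlib

open Cardinal Filter Topology

/-- The first uncountable ordinal. -/
noncomputable def omega1 : Ordinal.{0} := (Cardinal.aleph 1).ord

/-- The tree `T = ⋃ {ω₁^α : α a countable successor ordinal}` of transfinite sequences in
`ω₁` of countable successor length, encoded as pairs (length, function), with the
function normalized to `0` outside the domain. -/
def TreeT : Type 1 :=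
  {p : Ordinal.{0} × (Ordinal.{0} → Ordinal.{0}) //
    (∃ β : Ordinal.{0}, p.1 = β + 1) ∧ p.1 < omega1 ∧
    (∀ i, i < p.1 → p.2 i < omega1) ∧ (∀ i, ¬ i < p.1 → p.2 i = 0)}

/-- The tree order on `T`: extension of sequences. -/
def treeLE (s t : TreeT) : Prop := s.1.1 ≤ t.1.1 ∧ ∀ i, i < s.1.1 → s.1.2 i = t.1.2 i

/-- Strict tree order. -/
def treeLT (s t : TreeT) : Prop := treeLE s t ∧ s ≠ t

/-- The path space `P(T) ⊆ 2^T`: characteristic functions of downward closed chains. -/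
def PathSpace : Set (TreeT → Bool) :=
  {ε | (∀ s t, ε s = true → ε t = true → treeLE s t ∨ treeLE t s) ∧
    (∀ t s, ε t = true → treeLT s t → ε s = true)}

-- helpers
lemma omega1_isLimit : Order.IsSuccLimit omega1 :=
  Cardinal.isSuccLimit_ord Cardinal.aleph0_lt_aleph_one.le

lemma omega1_pos : (0 : Ordinal.{0}) < omega1 := omega1_isLimit.pos

lemma succ_lt_omega1 {o : Ordinal.{0}} (h : o < omega1) : o + 1 < omega1 := by
  rw [Ordinal.add_one_eq_succ]; exact omega1_isLimit.succ_lt h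

lemma lt_add_one_ord (o : Ordinal.{0}) : o < o + 1 := by
  rw [Ordinal.add_one_eq_succ]; exact Order.lt_succ o

lemma treeLE_refl (s : TreeT) : treeLE s s := ⟨le_rfl, fun _ _ => rfl⟩

lemma TreeT.ext' {s t : TreeT} (h1 : s.1.1 = t.1.1)
    (h2 : ∀ i, i < s.1.1 → s.1.2 i = t.1.2 i) : s = t := by
  apply Subtype.ext
  refine Prod.ext_iff.mpr ⟨h1, funext fun i => ?_⟩
  by_cases hi : i < s.1.1
  · exact h2 i hi
  · rw [s.2.2.2.2 i hi, t.2.2.2.2 i (h1 ▸ hi)]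

lemma exists_bound {L : Set Ordinal.{0}} (hL : L.Countable) (h : ∀ o ∈ L, o < omega1) :
    ∃ δ, δ < omega1 ∧ ∀ o ∈ L, o ≤ δ := by
  rcases L.eq_empty_or_nonempty with rfl | hne
  · exact ⟨0, omega1_pos, by simp⟩
  obtain ⟨f, rfl⟩ := hL.exists_eq_range hne
  refine ⟨⨆ n, f n, ?_, ?_⟩
  · exact Cardinal.iSup_lt_ord_lift_of_isRegular Cardinal.isRegular_aleph_one
      (by simpa using Cardinal.aleph0_lt_aleph_one) fun n => h _ (Set.mem_range_self n)
  · rintro o ⟨n, rfl⟩; exact Ordinal.le_iSup f n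

lemma not_countable_Iio : ¬ (Set.Iio omega1).Countable := by
  intro h
  obtain ⟨δ, hδ, hbound⟩ := exists_bound h (fun o ho => ho)
  exact absurd (hbound (δ + 1) (succ_lt_omega1 hδ)) (not_le.mpr (lt_add_one_ord δ))

lemma countable_Iio_omega1 {o : Ordinal.{0}} (h : o < omega1) : (Set.Iio o).Countable := by
  rw [Cardinal.countable_iff_lt_aleph_one, Ordinal.mk_Iio_ordinal, Cardinal.lift_lt_aleph_one]
  exact Cardinal.lt_ord.mp h

lemma countable_Iic_omega1 {o : Ordinal.{0}} (h : o < omega1) : (Set.Iic o).Countable :=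
  (countable_Iio_omega1 (succ_lt_omega1 h)).mono (fun a ha => lt_of_le_of_lt ha (lt_add_one_ord o))

lemma inter_countable_aux {A B : TreeT → Bool} (hA : A ∈ PathSpace) (hB : B ∈ PathSpace)
    {t : TreeT} (hAt : A t = true) (hBt : B t = false) :
    {s | A s = true ∧ B s = true}.Countable := by
  have hlen : ∀ s ∈ {s : TreeT | A s = true ∧ B s = true}, s.1.1 ∈ Set.Iic t.1.1 := by
    intro s hs
    rcases hA.1 s t hs.1 hAt with h | h
    · exact h.1
    · rcases eq_or_ne t s with rfl | hne
      · rw [hs.2] at hBt; exact absurd hBt (by simp)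
      · exact absurd (hB.2 s t hs.2 ⟨h, hne⟩) (by simp [hBt])
  refine Set.MapsTo.countable_of_injOn hlen ?_ (countable_Iic_omega1 t.2.2.1)
  intro s hs s' hs' hss'
  rcases hA.1 s s' hs.1 hs'.1 with h | h
  · exact TreeT.ext' hss' h.2
  · exact (TreeT.ext' hss'.symm h.2).symm

lemma inter_countable {A B : TreeT → Bool} (hA : A ∈ PathSpace) (hB : B ∈ PathSpace)
    (h : A ≠ B) : {s | A s = true ∧ B s = true}.Countable := by
  obtain ⟨t, ht⟩ := Function.ne_iff.mp h
  cases hA' : A t <;> cases hB' : B t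
  · exact absurd (hA'.trans hB'.symm) ht
  · have hsub : {s : TreeT | A s = true ∧ B s = true} ⊆ {s : TreeT | B s = true ∧ A s = true} :=
      fun s hs => ⟨hs.2, hs.1⟩
    exact (inter_countable_aux hB hA hB' hA').mono hsub
  · exact inter_countable_aux hA hB hA' hB'
  · exact absurd (hA'.trans hB'.symm) ht
lemma exists_agree (x : TreeT → Bool) (hx : x ∈ PathSpace) (S : Set TreeT) (hS : S.Countable) :
    ∃ y, y ∈ PathSpace ∧ y ≠ x ∧ ∀ s ∈ S, y s = x s := by
  classical
  by_cases hb : ∃ δ, δ < omega1 ∧ ∀ s, x s = true → s.1.1 ≤ δ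
  · -- bounded support: extend the chain
    obtain ⟨δ0, hδ0, hδ0b⟩ := hb
    set L : Set Ordinal.{0} := (fun s : TreeT => s.1.1) '' {s | x s = true} with hLdef
    set δ : Ordinal.{0} := sSup L with hδdef
    have hub : δ0 ∈ upperBounds L := by rintro o ⟨s, hs, rfl⟩; exact hδ0b s hs
    have hδlt : δ < omega1 := lt_of_le_of_lt (csSup_le' hub) hδ0
    have hlen_le : ∀ s, x s = true → s.1.1 ≤ δ :=
      fun s hs => le_csSup ⟨δ0, hub⟩ ⟨s, hs, rfl⟩
    have hex : ∀ β, β < δ → ∃ u, x u = true ∧ β < u.1.1 := by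
      intro β hβ
      obtain ⟨o, ⟨u, hu, rfl⟩, hlt⟩ := exists_lt_of_lt_csSup' hβ
      exact ⟨u, hu, hlt⟩
    set F : Ordinal.{0} → Ordinal.{0} := fun i =>
      if h : ∃ u, x u = true ∧ i < u.1.1 then (Classical.choose h).1.2 i else 0 with hFdef
    have hagreeval : ∀ u v : TreeT, x u = true → x v = true → ∀ i, i < u.1.1 → i < v.1.1 →
        u.1.2 i = v.1.2 i := by
      intro u v hu hv i hiu hiv
      rcases hx.1 u v hu hv with h | h
      · exact h.2 i hiu
      · exact (h.2 i hiv).symm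
    have hF : ∀ u, x u = true → ∀ i, i < u.1.1 → F i = u.1.2 i := by
      intro u hu i hi
      have hh : ∃ w, x w = true ∧ i < w.1.1 := ⟨u, hu, hi⟩
      rw [hFdef]
      simp only [dif_pos hh]
      exact hagreeval _ u (Classical.choose_spec hh).1 hu i (Classical.choose_spec hh).2 hi
    have hFlt : ∀ i, F i < omega1 := by
      intro i
      rw [hFdef]
      simp only
      split
      · next h => exact (Classical.choose h).2.2.2.1 i (Classical.choose_spec h).2
      · exact omega1_pos
    have hV : ¬ Set.Iio omega1 ⊆ (fun s : TreeT => s.1.2 δ) '' S :=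
      fun hsub => not_countable_Iio ((hS.image _).mono hsub)
    obtain ⟨ξ, hξlt, hξ⟩ := Set.not_subset.mp hV
    have hsucc : δ < δ + 1 := lt_add_one_ord δ
    have ht1 : ∀ i, i < δ + 1 → (if i < δ then F i else if i = δ then ξ else 0) < omega1 := by
      intro i _
      split
      · exact hFlt i
      · split
        · exact hξlt
        · exact omega1_pos
    have ht2 : ∀ i, ¬ i < δ + 1 → (if i < δ then F i else if i = δ then ξ else 0) = 0 := by
      intro i hi
      rw [if_neg (fun h => hi (h.trans hsucc)), if_neg (fun h => hi (by rw [h]; exact hsucc))]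
    set t : TreeT := ⟨(δ + 1, fun i => if i < δ then F i else if i = δ then ξ else 0),
      ⟨δ, rfl⟩, succ_lt_omega1 hδlt, ht1, ht2⟩ with htdef
    have ht_val : ∀ i, i < δ → t.1.2 i = F i := fun i hi => if_pos hi
    have ht_valδ : t.1.2 δ = ξ := by
      show (if δ < δ then F δ else if δ = δ then ξ else 0) = ξ
      rw [if_neg (lt_irrefl δ), if_pos rfl]
    have hxt : x t = false := by
      cases h : x t
      · rfl
      · exact absurd (hlen_le t h) (not_le.mpr hsucc)
    have hsupp_le : ∀ s, x s = true → treeLE s t := by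
      intro s hs
      refine ⟨(hlen_le s hs).trans hsucc.le, fun i hi => ?_⟩
      have hiδ : i < δ := lt_of_lt_of_le hi (hlen_le s hs)
      rw [ht_val i hiδ, hF s hs i hi]
    have hpred : ∀ s, treeLT s t → x s = true := by
      intro s hst
      obtain ⟨hle, hne⟩ := hst
      rcases eq_or_lt_of_le hle.1 with heq | hlt
      · exact absurd (TreeT.ext' heq hle.2) hne
      · have hsle : s.1.1 ≤ δ := by
          have hlt' : s.1.1 < δ + 1 := hlt
          rw [Ordinal.add_one_eq_succ] at hlt'
          exact Order.lt_succ_iff.mp hlt'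
        obtain ⟨β, hβ⟩ := s.2.1
        have hβs : β < s.1.1 := hβ ▸ lt_add_one_ord β
        obtain ⟨u, hu, hβu⟩ := hex β (lt_of_lt_of_le hβs hsle)
        have hsu : s.1.1 ≤ u.1.1 := by
          rw [hβ, Ordinal.add_one_eq_succ]
          exact Order.succ_le_of_lt hβu
        have hlesu : treeLE s u := by
          refine ⟨hsu, fun i hi => ?_⟩
          have hiδ : i < δ := lt_of_lt_of_le hi hsle
          rw [hle.2 i hi, ht_val i hiδ, hF u hu i (lt_of_lt_of_le hi hsu)]
        rcases eq_or_ne s u with rfl | hne'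
        · exact hu
        · exact hx.2 u s hu ⟨hlesu, hne'⟩
    refine ⟨fun s => x s || decide (s = t), ⟨?_, ?_⟩, ?_, ?_⟩
    · intro s s' hs hs'
      rw [Bool.or_eq_true] at hs hs'
      rcases hs with hs | hs
      · rcases hs' with hs' | hs'
        · exact hx.1 s s' hs hs'
        · obtain rfl := of_decide_eq_true hs'
          exact Or.inl (hsupp_le s hs)
      · obtain rfl := of_decide_eq_true hs
        rcases hs' with hs' | hs'
        · exact Or.inr (hsupp_le s' hs')
        · obtain rfl := of_decide_eq_true hs'
          exact Or.inl (treeLE_refl _)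
    · intro s' s hs' hlt
      rw [Bool.or_eq_true] at hs' ⊢
      rcases hs' with hs' | hs'
      · exact Or.inl (hx.2 s' s hs' hlt)
      · obtain rfl := of_decide_eq_true hs'
        exact Or.inl (hpred s hlt)
    · intro hcontra
      have h := congrFun hcontra t
      simp [hxt] at h
    · intro s hsS
      have hst : s ≠ t := by
        intro hcontra
        exact hξ ⟨s, hsS, by rw [hcontra]; exact ht_valδ⟩
      simp [hst]
  · -- unbounded support: truncate
    push_neg at hb
    obtain ⟨δS, hδSlt, hδSb⟩ := exists_bound (hS.image (fun s : TreeT => s.1.1))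
      (by rintro o ⟨s, _, rfl⟩; exact s.2.2.1)
    obtain ⟨u, hu, hulen⟩ := hb δS hδSlt
    refine ⟨fun s => x s && decide (s.1.1 ≤ δS), ⟨?_, ?_⟩, ?_, ?_⟩
    · intro s s' hs hs'
      rw [Bool.and_eq_true] at hs hs'
      exact hx.1 s s' hs.1 hs'.1
    · intro s' s hs' hlt
      rw [Bool.and_eq_true] at hs' ⊢
      exact ⟨hx.2 s' s hs'.1 hlt,
        decide_eq_true (le_trans hlt.1.1 (of_decide_eq_true hs'.2))⟩
    · intro hcontra
      have h := congrFun hcontra u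
      have h2 : ¬ u.1.1 ≤ δS := not_le.mpr hulen
      simp [hu, h2] at h
    · intro s hsS
      have : s.1.1 ≤ δS := hδSb _ ⟨s, hsS, rfl⟩
      simp [this]
/-- (b) the path space `P(T)` has no `G_δ` points; (c) no point of
`P(T) \ Σ(T)` (uncountable support) is the limit of an injective sequence in `P(T)`;
moreover `P(T)` fails the countable chain condition. -/
theorem statement19 :
    -- (b) no G_δ points
    (∀ x : ↥PathSpace, ¬ ∃ V : ℕ → Set ↥PathSpace,
      (∀ n, IsOpen (V n)) ∧ (⋂ n, V n) = {x}) ∧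
    -- (c) no point of `P(T) \ Σ(T)` is the limit of an injective sequence
    (∀ x : ↥PathSpace, ¬ {t : TreeT | (x : TreeT → Bool) t ≠ false}.Countable →
      ∀ g : ℕ → ↥PathSpace, Function.Injective g → ¬ Tendsto g atTop (𝓝 x)) ∧
    -- `P(T)` does not have the countable chain condition
    (∃ 𝒰 : Set (Set ↥PathSpace), (∀ W ∈ 𝒰, IsOpen W ∧ W.Nonempty) ∧
      𝒰.Pairwise (Disjoint · ·) ∧ ¬ 𝒰.Countable) := by
  classical
  refine ⟨?_, ?_, ?_⟩
  · -- (b) no Gδ points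
    rintro x ⟨V, hVopen, hVx⟩
    have hxV : ∀ n, x ∈ V n := fun n =>
      Set.mem_iInter.mp (by rw [hVx]; exact rfl) n
    have hU : ∀ n, ∃ U : Set (TreeT → Bool), IsOpen U ∧ Subtype.val ⁻¹' U = V n :=
      fun n => isOpen_induced_iff.mp (hVopen n)
    choose U hUopen hUV using hU
    have hxU : ∀ n, (x : TreeT → Bool) ∈ U n := fun n => by
      have := hxV n
      rw [← hUV n] at this
      exact this
    have hbasic : ∀ n, ∃ I : Finset TreeT, ∃ u : TreeT → Set Bool,
        (∀ a ∈ I, IsOpen (u a) ∧ (x : TreeT → Bool) a ∈ u a) ∧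
        (I : Set TreeT).pi u ⊆ U n :=
      fun n => isOpen_pi_iff.mp (hUopen n) _ (hxU n)
    choose I u hu hsubn using hbasic
    obtain ⟨y, hyP, hyne, hagree⟩ := exists_agree x.1 x.2 (⋃ n, (I n : Set TreeT))
      (Set.countable_iUnion fun n => (I n).countable_toSet)
    have hyU : ∀ n, y ∈ U n := fun n => hsubn n (fun a ha => by
      rw [hagree a (Set.mem_iUnion.mpr ⟨n, ha⟩)]
      exact (hu n a ha).2)
    have hmem : (⟨y, hyP⟩ : ↥PathSpace) ∈ ⋂ n, V n := Set.mem_iInter.mpr fun n => by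
      rw [← hUV n]
      exact hyU n
    rw [hVx] at hmem
    exact hyne (congrArg Subtype.val hmem)
  · -- (c)
    intro x hxu g hginj htend
    apply hxu
    have hcoord : ∀ t : TreeT, (x : TreeT → Bool) t = true →
        ∃ N, ∀ n ≥ N, (g n : TreeT → Bool) t = true := by
      intro t ht
      have h1 : Tendsto (fun n => (g n : TreeT → Bool) t) atTop
          (𝓝 ((x : TreeT → Bool) t)) :=
        (((continuous_apply t).comp continuous_subtype_val).tendsto x).comp htend
      rw [ht, nhds_discrete Bool, tendsto_pure] at h1
      exact eventually_atTop.mp h1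
    set D : ℕ × ℕ → Set TreeT := fun p =>
      {s | p.1 ≠ p.2 ∧ (g p.1 : TreeT → Bool) s = true ∧ (g p.2 : TreeT → Bool) s = true}
      with hD
    have hDc : ∀ p, (D p).Countable := by
      intro p
      by_cases hp : p.1 = p.2
      · have : D p = ∅ := by ext s; simp [hD, hp]
        rw [this]; exact Set.countable_empty
      · have hne : (g p.1 : TreeT → Bool) ≠ (g p.2 : TreeT → Bool) :=
          fun h => hp (hginj (Subtype.ext h))
        have hsub2 : D p ⊆ {s : TreeT |
            (g p.1 : TreeT → Bool) s = true ∧ (g p.2 : TreeT → Bool) s = true} :=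
          fun s hs => ⟨hs.2.1, hs.2.2⟩
        exact (inter_countable (g p.1).2 (g p.2).2 hne).mono hsub2
    have hsub : {t : TreeT | (x : TreeT → Bool) t ≠ false} ⊆ ⋃ p : ℕ × ℕ, D p := by
      intro t ht
      have ht' : (x : TreeT → Bool) t = true := by
        cases h : (x : TreeT → Bool) t
        · exact absurd h ht
        · rfl
      obtain ⟨N, hN⟩ := hcoord t ht'
      exact Set.mem_iUnion.mpr ⟨(N, N + 1),
        by omega, hN N le_rfl, hN (N + 1) (by omega)⟩
    exact (Set.countable_iUnion hDc).mono hsub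
  · -- ccc fails
    have hone : (1 : Ordinal.{0}) < omega1 := Ordinal.one_lt_of_isSuccLimit omega1_isLimit
    let node : ↥(Set.Iio omega1) → TreeT := fun ξ =>
      ⟨(1, fun i => if i = 0 then ξ.1 else 0), ⟨0, (zero_add 1).symm⟩, hone,
        fun i hi => by
          dsimp only
          rw [if_pos (Ordinal.lt_one_iff_zero.mp hi)]; exact ξ.2,
        fun i hi => by
          dsimp only
          rw [if_neg (fun h => hi (by rw [h]; exact zero_lt_one))]⟩
    have hnodeval : ∀ ξ, (node ξ).1.2 0 = ξ.1 := fun ξ => if_pos rfl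
    have hnodelen : ∀ ξ, (node ξ).1.1 = 1 := fun _ => rfl
    have hnodeinj : Function.Injective node := by
      intro ξ η h
      apply Subtype.ext
      rw [← hnodeval ξ, ← hnodeval η, h]
    let χ : ↥(Set.Iio omega1) → (TreeT → Bool) := fun ξ s =>
      if s = node ξ then true else false
    have hχtrue : ∀ ξ s, χ ξ s = true → s = node ξ := by
      intro ξ s h
      by_contra hc
      rw [show χ ξ s = if s = node ξ then true else false from rfl, if_neg hc] at h
      exact Bool.false_ne_true h
    have hlen_one : ∀ (s : TreeT) (ξ : ↥(Set.Iio omega1)), treeLE s (node ξ) → s = node ξ := by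
      intro s ξ h
      have h1 : (1 : Ordinal.{0}) ≤ s.1.1 := by
        obtain ⟨β, hβ⟩ := s.2.1
        rw [hβ]
        simpa using add_le_add_right (Ordinal.zero_le β) 1
      exact TreeT.ext' (le_antisymm h.1 h1) h.2
    have hχP : ∀ ξ, χ ξ ∈ PathSpace := by
      intro ξ
      constructor
      · intro s s' hs hs'
        rw [hχtrue ξ s hs, hχtrue ξ s' hs']
        exact Or.inl (treeLE_refl _)
      · intro s' s hs' hlt
        rw [hχtrue ξ s' hs'] at hlt
        exact absurd (hlen_one s ξ hlt.1) hlt.2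
    let Uu : ↥(Set.Iio omega1) → Set ↥PathSpace := fun ξ =>
      {ε : ↥PathSpace | (ε : TreeT → Bool) (node ξ) = true}
    have hUopen : ∀ ξ, IsOpen (Uu ξ) := by
      intro ξ
      have hc : Continuous (fun ε : ↥PathSpace => (ε : TreeT → Bool) (node ξ)) :=
        (continuous_apply (node ξ)).comp continuous_subtype_val
      exact (isOpen_discrete ({true} : Set Bool)).preimage hc
    have hUmem : ∀ ξ, (⟨χ ξ, hχP ξ⟩ : ↥PathSpace) ∈ Uu ξ := by
      intro ξ
      show χ ξ (node ξ) = true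
      exact if_pos rfl
    have hUdisj : ∀ ξ η, ξ ≠ η → Disjoint (Uu ξ) (Uu η) := by
      intro ξ η hne
      rw [Set.disjoint_left]
      intro ε hξ hη
      apply hne
      apply hnodeinj
      rcases ε.2.1 (node ξ) (node η) hξ hη with h | h
      · exact hlen_one (node ξ) η h
      · exact (hlen_one (node η) ξ h).symm
    refine ⟨Set.range Uu, ?_, ?_, ?_⟩
    · rintro W ⟨ξ, rfl⟩
      exact ⟨hUopen ξ, ⟨_, hUmem ξ⟩⟩
    · rintro W ⟨ξ, rfl⟩ W' ⟨η, rfl⟩ hne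
      exact hUdisj ξ η (fun h => hne (by rw [h]))
    · intro hc
      apply not_countable_Iio
      have hG : Set.MapsTo (fun o : Ordinal.{0} =>
          if h : o < omega1 then Uu ⟨o, h⟩ else ∅) (Set.Iio omega1) (Set.range Uu) := by
        intro o ho
        have ho2 : o < omega1 := ho
        show (if h : o < omega1 then Uu ⟨o, h⟩ else ∅) ∈ Set.range Uu
        rw [dif_pos ho2]
        exact Set.mem_range_self _
      refine hG.countable_of_injOn ?_ hc
      intro o ho o' ho' heq
      have ho2 : o < omega1 := ho
      have ho2' : o' < omega1 := ho'
      have heq2 : (if h : o < omega1 then Uu ⟨o, h⟩ else ∅) =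
          (if h : o' < omega1 then Uu ⟨o', h⟩ else ∅) := heq
      rw [dif_pos ho2, dif_pos ho2'] at heq2
      by_contra hne
      have hne' : (⟨o, ho2⟩ : ↥(Set.Iio omega1)) ≠ ⟨o', ho2'⟩ := fun h => hne (congrArg Subtype.val h)
      have := hUdisj _ _ hne'
      rw [heq2] at this
      exact Set.disjoint_left.mp this (hUmem ⟨o', ho2'⟩) (hUmem ⟨o', ho2'⟩)
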